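/- Every abelian group is acyclically closed: for any abelian group G, any acyclic system of equations x_i = w_i(x_1,...,x_m) over G (where each w_i ∈ G * F_m maps to the commutator subgroup under the projection G * F_m → F_m → H_1(F_m)) has a unique solution in G. -/

import Mathlib

open Monoid

/-- The homomorphism `G ∗ F_m → H₁(F_m)` : kill `G`, project the free group
`F_m` onto its abelianization `ℤ^m` (written multiplicatively). -/
noncomputable def acyclicTest (G : Type*) [Group G] (m : ℕ) :
    (Monoid.Coprod G (FreeGroup (Fin m))) →* Multiplicative (Fin m →₀ ℤ) :=
  Monoid.Coprod.lift 1
    (FreeGroup.lift fun j => Multiplicative.ofAdd (Finsupp.single j (1 : ℤ)))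

/-- A word `w ∈ G ∗ F_m` is acyclic if it dies in `H₁(F_m)`. -/
def IsAcyclicWord {G : Type*} [Group G] {m : ℕ}
    (w : Monoid.Coprod G (FreeGroup (Fin m))) : Prop :=
  acyclicTest G m w = 1

/-- Substituting the values `g : Fin m → G` for the variables in a word of `G ∗ F_m`. -/
noncomputable def substWord {G : Type*} [Group G] {m : ℕ} (g : Fin m → G) :
    (Monoid.Coprod G (FreeGroup (Fin m))) →* G :=
  Monoid.Coprod.lift (MonoidHom.id G) (FreeGroup.lift g)

/-- A group `G` is *acyclically closed* (AC) if every acyclic system of equations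
`x_i = w_i(x_1, …, x_m)` over `G` has a unique solution in `G`. -/
def IsAcyclicallyClosed (G : Type*) [Group G] : Prop :=
  ∀ (m : ℕ) (w : Fin m → Monoid.Coprod G (FreeGroup (Fin m))),
    (∀ i, IsAcyclicWord (w i)) →
    ∃! g : Fin m → G, ∀ i, substWord g (w i) = g i

noncomputable def powHom {G : Type*} [CommGroup G] {m : ℕ} (g : Fin m → G) :
    Multiplicative (Fin m →₀ ℤ) →* G where
  toFun a := (Multiplicative.toAdd a).prod fun j n => g j ^ n
  map_one' := by simp
  map_mul' a b := Finsupp.prod_add_index' (by simp) (fun j n₁ n₂ => zpow_add (g j) n₁ n₂)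

lemma subst_eq {G : Type*} [CommGroup G] {m : ℕ} (g : Fin m → G) :
    substWord g = (powHom g).comp (acyclicTest G m) * substWord (fun _ => (1 : G)) := by
  apply Monoid.Coprod.hom_ext
  · ext c
    simp [substWord, acyclicTest, powHom]
  · apply FreeGroup.ext_hom
    intro j
    simp [substWord, acyclicTest, powHom]
    rw [Fintype.prod_eq_single j (fun x hx => by simp [Finsupp.single_apply, Ne.symm hx])]; simp

lemma subst_acyclic {G : Type*} [CommGroup G] {m : ℕ} (g : Fin m → G)
    {w : Monoid.Coprod G (FreeGroup (Fin m))} (hw : IsAcyclicWord w) :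
    substWord g w = substWord (fun _ => (1 : G)) w := by
  have h := congrFun (congrArg DFunLike.coe (subst_eq g)) w
  have hw' : acyclicTest G m w = 1 := hw
  simp only [MonoidHom.mul_apply, MonoidHom.comp_apply, hw', map_one, one_mul] at h
  exact h


/-- Every abelian group is acyclically closed: every acyclic system of
equations over an abelian group `G` has a unique solution in `G`. -/
theorem commGroup_isAcyclicallyClosed (G : Type*) [CommGroup G] :
    IsAcyclicallyClosed G := by
  intro m w hw
  refine ⟨fun i => substWord (fun _ => (1 : G)) (w i), fun i => subst_acyclic _ (hw i), ?_⟩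
  intro g hg
  funext i
  rw [← hg i, subst_acyclic _ (hw i)]
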